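/- arXiv:2104.06497 — 2 statements merged into one kernel-verified Lean document; each statement's English description precedes it below -/
import Mathlib

section
/- Let X be a real infinite-dimensional Banach space with a Schauder basis (x_n)_{n=1}^∞ with basis constant K and coordinate functionals (x*_n). Then (1/(2K))·bc₂((x*_n)) ≤ sh((x_n)) ≤ K·bc₂((x*_n)), where bc₂((x*_n)) is computed for the basic sequence (x*_n) inside its closed linear span V, with biorthogonal functionals (j x_n) ⊆ V* given by ⟨j x, x*⟩ = x*(x). -/
open Filter Metric NormedSpace Set Topology

noncomputable section

variable {E : Type*} [NormedAddCommGroup E] [NormedSpace ℝ E]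

/-- `f` is the sequence of coordinate functionals of the Schauder basis `x`:
every vector has an expansion along `x`, and such expansions are unique. -/
structure IsSchauderBasis (x : ℕ → E) (f : ℕ → E →L[ℝ] ℝ) : Prop where
  expand : ∀ v : E,
    Tendsto (fun n => ∑ i ∈ Finset.range n, f i v • x i) atTop (𝓝 v)
  unique : ∀ (a : ℕ → ℝ) (v : E),
    Tendsto (fun n => ∑ i ∈ Finset.range n, a i • x i) atTop (𝓝 v) → ∀ i, a i = f i v

/-- the `n`-th basis projection `P_n`. -/
def basisProj (x : ℕ → E) (f : ℕ → E →L[ℝ] ℝ) (n : ℕ) : E →L[ℝ] E :=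
  ∑ i ∈ Finset.range n, (f i).smulRight (x i)

/-- closed linear span of `{y i : i ≥ n}`. -/
def tailSpan (y : ℕ → E) (n : ℕ) : Submodule ℝ E :=
  (Submodule.span ℝ (y '' {i | n ≤ i})).topologicalClosure

/-- `‖g‖_n` : the norm of the restriction of `g` to the closed span of the tail of `y`. -/
def tailNorm (y : ℕ → E) (g : E →L[ℝ] ℝ) (n : ℕ) : ℝ :=
  ‖g.comp (tailSpan y n).subtypeL‖

/-- the quantity `sh` measuring how far a basic sequence is from being shrinking. -/
def sh (y : ℕ → E) : ℝ :=
  sSup ((fun g : E →L[ℝ] ℝ => limsup (tailNorm y g) atTop) '' {g | ‖g‖ ≤ 1})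

/-- non-symmetrised Hausdorff distance `d̂(A,B)`. -/
def hdist (A B : Set E) : ℝ := sSup ((fun a => infDist a B) '' A)

/-- ordinary distance between two sets. -/
def setDist (A B : Set E) : ℝ := sInf {d : ℝ | ∃ a ∈ A, ∃ b ∈ B, d = dist a b}

/-- `ca` measures how far a sequence is from being norm-Cauchy. -/
def ca (z : ℕ → E) : ℝ :=
  ⨅ n : ℕ, sSup {d : ℝ | ∃ k, n ≤ k ∧ ∃ l, n ≤ l ∧ d = ‖z k - z l‖}

/-- measure of non-separability. -/
def sep (A : Set E) : ℝ :=
  sInf {ε : ℝ | 0 < ε ∧ ∃ C : Set E, C.Countable ∧ ∀ a ∈ A, ∃ c ∈ C, ‖a - c‖ ≤ ε}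

/-- `V`: the closed linear span of the coordinate functionals. -/
def dualSpan (g : ℕ → E →L[ℝ] ℝ) : Submodule ℝ (StrongDual ℝ E) :=
  (Submodule.span ℝ (Set.range g)).topologicalClosure

lemma mem_dualSpan (g : ℕ → E →L[ℝ] ℝ) (i : ℕ) : g i ∈ dualSpan g :=
  Submodule.le_topologicalClosure _ (Submodule.subset_span ⟨i, rfl⟩)

/-- the quantity `bc₁` measuring non-bounded-completeness. -/
def bc1 (y : ℕ → E) : ℝ :=
  sSup {c : ℝ | ∃ a : ℕ → ℝ,
    (∀ n, ‖∑ i ∈ Finset.range n, a i • y i‖ ≤ 1) ∧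
    c = ca (fun n => ∑ i ∈ Finset.range n, a i • y i)}

/-- the quantity `bc₂`. -/
def bc2 (y : ℕ → E) (g : ℕ → E →L[ℝ] ℝ) : ℝ :=
  sSup {c : ℝ | ∃ φ : ↥(dualSpan g) →L[ℝ] ℝ,
    @norm _ (@ContinuousLinearMap.hasOpNorm ℝ ℝ ↥(dualSpan g) ℝ _ _ _ _ _ _ (RingHom.id ℝ)) φ ≤ 1 ∧
    c = ca (fun n => ∑ i ∈ Finset.range n, φ ⟨g i, mem_dualSpan g i⟩ • y i)}

/-- the quantity `bc₃`. -/
def bc3 (y : ℕ → E) (g : ℕ → E →L[ℝ] ℝ) : ℝ :=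
  sSup {c : ℝ | ∃ Φ : StrongDual ℝ (StrongDual ℝ E), ‖Φ‖ ≤ 1 ∧
    c = ca (fun n => ∑ i ∈ Finset.range n, Φ (g i) • y i)}

/-- `α_Y(X)`: measures how well `Y` embeds isomorphically into `X`. -/
def alpha (Y X : Type*) [NormedAddCommGroup Y] [NormedSpace ℝ Y]
    [NormedAddCommGroup X] [NormedSpace ℝ X] : ℝ :=
  sSup {c : ℝ | ∃ T : Y →L[ℝ] X, ‖T‖ ≤ 1 ∧ ∀ y : Y, c * ‖y‖ ≤ ‖T y‖}

/-- `β_Y(X)`: measures how well `Y` embeds complementably into `X`. -/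
def beta (Y X : Type*) [NormedAddCommGroup Y] [NormedSpace ℝ Y]
    [NormedAddCommGroup X] [NormedSpace ℝ X] : ℝ :=
  sSup {c : ℝ | ∃ (A : X →L[ℝ] Y) (B : Y →L[ℝ] X),
    A.comp B = ContinuousLinearMap.id ℝ Y ∧ c * (‖A‖ * ‖B‖) ≤ 1}

/-- weak-star closure of a subset of the bidual. -/
def wstarClosure {X : Type*} [NormedAddCommGroup X] [NormedSpace ℝ X]
    (S : Set (StrongDual ℝ (StrongDual ℝ X))) : Set (StrongDual ℝ (StrongDual ℝ X)) :=
  {z | StrongDual.toWeakDual z ∈ closure (StrongDual.toWeakDual '' S)}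

/-- the measure of weak non-compactness `wk_X(A)`. -/
def wk (X : Type*) [NormedAddCommGroup X] [NormedSpace ℝ X] (A : Set X) : ℝ :=
  hdist (wstarClosure ((inclusionInDoubleDual ℝ X) '' A))
    (Set.range (inclusionInDoubleDual ℝ X))

/-- weak-star cluster points in the bidual of a sequence in `X`. -/
def wclust {X : Type*} [NormedAddCommGroup X] [NormedSpace ℝ X] (u : ℕ → X) :
    Set (StrongDual ℝ (StrongDual ℝ X)) :=
  {z | MapClusterPt (StrongDual.toWeakDual z) atTop
      (fun n => StrongDual.toWeakDual (inclusionInDoubleDual ℝ X (u n)))}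

/-- the measure of weak non-compactness `wck_X(A)`. -/
def wck (X : Type*) [NormedAddCommGroup X] [NormedSpace ℝ X] (A : Set X) : ℝ :=
  sSup {c : ℝ | ∃ u : ℕ → X, (∀ n, u n ∈ A) ∧
    c = setDist (wclust u) (Set.range (inclusionInDoubleDual ℝ X))}


/-- the canonical map `j : X → V*` for a subspace `V` of the dual,
`⟨j v, x*⟩ = x*(v)`. -/
def jfun {X : Type*} [NormedAddCommGroup X] [NormedSpace ℝ X]
    (V : Submodule ℝ (StrongDual ℝ X)) (v : X) : ↥V →L[ℝ] ℝ :=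
  (inclusionInDoubleDual ℝ X v).comp V.subtypeL

/-- the space `ℓ₁` of absolutely summable real sequences. -/
abbrev ell1 : Type := lp (fun _ : ℕ => ℝ) 1

/-- the space `c₀` of real sequences converging to zero, with the sup norm. -/
abbrev czero : Type := ZeroAtInftyContinuousMap ℕ ℝ

end

namespace Bc2ShAux

open Filter Metric NormedSpace Set Topology

variable {X : Type*} [NormedAddCommGroup X] [NormedSpace ℝ X]

noncomputable instance instNACGDualSub (V : Submodule ℝ (StrongDual ℝ X)) :
    NormedAddCommGroup (↥V →L[ℝ] ℝ) :=
  ContinuousLinearMap.toNormedAddCommGroup (E := ↥V) (F := ℝ) (σ₁₂ := RingHom.id ℝ)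

noncomputable instance instNSDualSub (V : Submodule ℝ (StrongDual ℝ X)) :
    NormedSpace ℝ (↥V →L[ℝ] ℝ) :=
  ContinuousLinearMap.toNormedSpace (E := ↥V) (F := ℝ) (σ₁₂ := RingHom.id ℝ) (𝕜' := ℝ)

theorem basisProj_apply (x : ℕ → X) (f : ℕ → X →L[ℝ] ℝ) (n : ℕ) (v : X) :
    basisProj x f n v = ∑ i ∈ Finset.range n, f i v • x i := by
  simp [basisProj]

theorem coord_eq {x : ℕ → X} {f : ℕ → X →L[ℝ] ℝ} (hb : IsSchauderBasis x f) (i k : ℕ) :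
    f i (x k) = if i = k then 1 else 0 := by
  refine (hb.unique (fun i => if i = k then (1:ℝ) else 0) (x k) ?_ i).symm
  apply tendsto_atTop_of_eventually_const (i₀ := k + 1)
  intro n hn
  have hk : k ∈ Finset.range n := Finset.mem_range.mpr hn
  simp [ite_smul, Finset.sum_ite_eq', hk]

theorem proj_tendsto {x : ℕ → X} {f : ℕ → X →L[ℝ] ℝ} (hb : IsSchauderBasis x f) (v : X) :
    Tendsto (fun n => basisProj x f n v) atTop (𝓝 v) := by
  simpa only [← basisProj_apply] using hb.expand v

theorem x_ne_zero {x : ℕ → X} {f : ℕ → X →L[ℝ] ℝ} (hb : IsSchauderBasis x f) (k : ℕ) :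
    x k ≠ 0 := by
  intro h
  have := coord_eq hb k k
  rw [h, if_pos rfl, map_zero] at this
  exact zero_ne_one this

theorem proj_x {x : ℕ → X} {f : ℕ → X →L[ℝ] ℝ} (hb : IsSchauderBasis x f) {i n : ℕ}
    (h : i < n) : basisProj x f n (x i) = x i := by
  rw [basisProj_apply]
  have : ∀ j ∈ Finset.range n, f j (x i) • x j = if j = i then x i else 0 := by
    intro j _
    rw [coord_eq hb j i]
    split_ifs with hj <;> simp [hj]
  rw [Finset.sum_congr rfl this]
  simp [Finset.sum_ite_eq', Finset.mem_range.mpr h]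

theorem proj_x_zero {x : ℕ → X} {f : ℕ → X →L[ℝ] ℝ} (hb : IsSchauderBasis x f) {i n : ℕ}
    (h : n ≤ i) : basisProj x f n (x i) = 0 := by
  rw [basisProj_apply]
  refine Finset.sum_eq_zero fun j hj => ?_
  rw [coord_eq hb j i, if_neg, zero_smul]
  exact fun hji => absurd (hji ▸ Finset.mem_range.mp hj) (not_lt.mpr h)

end Bc2ShAux

namespace Bc2ShAux

variable {X : Type*} [NormedAddCommGroup X] [NormedSpace ℝ X]

open Filter Metric NormedSpace Set Topology

set_option maxHeartbeats 1000000
set_option synthInstance.maxHeartbeats 400000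

theorem bddAbove_norm_proj {x : ℕ → X} {f : ℕ → X →L[ℝ] ℝ} (hb : IsSchauderBasis x f)
    [CompleteSpace X] : BddAbove (Set.range fun n => ‖basisProj x f n‖) := by
  obtain ⟨C, hC⟩ := banach_steinhaus (g := fun n => basisProj x f n)
    (fun v => by
      obtain ⟨c, hc⟩ := (proj_tendsto hb v).norm.bddAbove_range
      exact ⟨c, fun n => hc ⟨n, rfl⟩⟩)
  exact ⟨C, fun r ⟨n, hn⟩ => hn ▸ hC n⟩

theorem norm_proj_le {x : ℕ → X} {f : ℕ → X →L[ℝ] ℝ} (hb : IsSchauderBasis x f)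
    [CompleteSpace X] {K : ℝ} (hK : K = ⨆ n : ℕ, ‖basisProj x f n‖) (n : ℕ) :
    ‖basisProj x f n‖ ≤ K := by
  rw [hK]
  exact le_ciSup (bddAbove_norm_proj hb) n

theorem one_le_K {x : ℕ → X} {f : ℕ → X →L[ℝ] ℝ} (hb : IsSchauderBasis x f)
    [CompleteSpace X] {K : ℝ} (hK : K = ⨆ n : ℕ, ‖basisProj x f n‖) : 1 ≤ K := by
  have h0 : x 0 ≠ 0 := x_ne_zero hb 0
  have h1 : ‖x 0‖ ≤ ‖basisProj x f 1‖ * ‖x 0‖ := by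
    conv_lhs => rw [← proj_x hb (show 0 < 1 by norm_num)]
    exact (basisProj x f 1).le_opNorm (x 0)
  have : 1 ≤ ‖basisProj x f 1‖ :=
    le_of_mul_le_mul_right (by simpa using h1) (norm_pos_iff.mpr h0)
  exact this.trans (norm_proj_le hb hK 1)

theorem tailSpan_antitone (x : ℕ → X) {m n : ℕ} (h : m ≤ n) :
    tailSpan x n ≤ tailSpan x m :=
  Submodule.topologicalClosure_mono (Submodule.span_mono
    (Set.image_mono fun _ hi => h.trans hi))

theorem mem_tailSpan_of_mem_span (x : ℕ → X) {n : ℕ} {v : X}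
    (h : v ∈ Submodule.span ℝ (x '' {i | n ≤ i})) : v ∈ tailSpan x n :=
  Submodule.le_topologicalClosure _ h

theorem x_mem_tailSpan (x : ℕ → X) {n i : ℕ} (h : n ≤ i) : x i ∈ tailSpan x n :=
  mem_tailSpan_of_mem_span x (Submodule.subset_span ⟨i, h, rfl⟩)

theorem tailNorm_nonneg (x : ℕ → X) (g : X →L[ℝ] ℝ) (n : ℕ) : 0 ≤ tailNorm x g n := by
  exact norm_nonneg (g.comp (tailSpan x n).subtypeL)

theorem apply_le_tailNorm {x : ℕ → X} {g : X →L[ℝ] ℝ} {n : ℕ} {v : X}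
    (hv : v ∈ tailSpan x n) : |g v| ≤ tailNorm x g n * ‖v‖ := by
  have := (g.comp (tailSpan x n).subtypeL).le_opNorm ⟨v, hv⟩
  simpa [tailNorm] using this

theorem tailNorm_le_norm (x : ℕ → X) (g : X →L[ℝ] ℝ) (n : ℕ) : tailNorm x g n ≤ ‖g‖ := by
  refine ContinuousLinearMap.opNorm_le_bound _ (norm_nonneg g) fun v => ?_
  simpa using g.le_opNorm (v : X)

theorem tailNorm_antitone (x : ℕ → X) (g : X →L[ℝ] ℝ) : Antitone (tailNorm x g) := by
  intro m n h
  refine ContinuousLinearMap.opNorm_le_bound _ (tailNorm_nonneg x g m) fun v => ?_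
  simpa using apply_le_tailNorm (tailSpan_antitone x h v.2)

theorem limsup_tailNorm_eq (x : ℕ → X) (g : X →L[ℝ] ℝ) :
    Filter.limsup (tailNorm x g) Filter.atTop = ⨅ n, tailNorm x g n :=
  (tendsto_atTop_ciInf (tailNorm_antitone x g)
    ⟨0, fun _ ⟨n, hn⟩ => hn ▸ tailNorm_nonneg x g n⟩).limsup_eq

theorem sh_bddAbove (x : ℕ → X) :
    BddAbove ((fun g : X →L[ℝ] ℝ => Filter.limsup (tailNorm x g) Filter.atTop) ''
      {g | ‖g‖ ≤ 1}) := by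
  refine ⟨1, fun r ⟨g, hg, hr⟩ => ?_⟩
  dsimp only at hr
  rw [← hr, limsup_tailNorm_eq]
  exact (ciInf_le ⟨0, fun _ ⟨n, hn⟩ => hn ▸ tailNorm_nonneg x g n⟩ 0).trans
    ((tailNorm_le_norm x g 0).trans hg)

theorem limsup_le_sh (x : ℕ → X) {g : X →L[ℝ] ℝ} (hg : ‖g‖ ≤ 1) :
    Filter.limsup (tailNorm x g) Filter.atTop ≤ sh x :=
  le_csSup (sh_bddAbove x) ⟨g, hg, rfl⟩

theorem sh_nonneg (x : ℕ → X) : 0 ≤ sh x := by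
  have h0 : Filter.limsup (tailNorm x (0 : X →L[ℝ] ℝ)) Filter.atTop = 0 := by
    have : tailNorm x (0 : X →L[ℝ] ℝ) = fun _ => 0 := by
      funext n
      unfold tailNorm
      rw [ContinuousLinearMap.zero_comp]
      exact @norm_zero (↥(tailSpan x n) →L[ℝ] ℝ) _
    rw [this]
    exact limsup_const 0
  calc (0:ℝ) = _ := h0.symm
  _ ≤ sh x := limsup_le_sh x (by simp)

end Bc2ShAux

namespace Bc2ShAux

variable {X : Type*} [NormedAddCommGroup X] [NormedSpace ℝ X]

open Filter Metric NormedSpace Set Topology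

set_option maxHeartbeats 1000000
set_option synthInstance.maxHeartbeats 400000

/-- `P_n` vanishes on the tail span. -/
theorem proj_eq_zero_on_tail {x : ℕ → X} {f : ℕ → X →L[ℝ] ℝ} (hb : IsSchauderBasis x f)
    {n : ℕ} {v : X} (hv : v ∈ tailSpan x n) : basisProj x f n v = 0 := by
  have hker : tailSpan x n ≤ LinearMap.ker (basisProj x f n : X →ₗ[ℝ] X) := by
    refine Submodule.topologicalClosure_minimal _ ?_ ?_
    · rw [Submodule.span_le]
      rintro - ⟨i, hi, rfl⟩
      exact LinearMap.mem_ker.mpr (proj_x_zero hb hi)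
    · exact ContinuousLinearMap.isClosed_ker (basisProj x f n)
  exact LinearMap.mem_ker.mp (hker hv)

/-- differences of projections land in the tail span. -/
theorem proj_sub_mem {x : ℕ → X} {f : ℕ → X →L[ℝ] ℝ} {n k l : ℕ}
    (hk : n ≤ k) (hl : n ≤ l) (u : X) :
    basisProj x f k u - basisProj x f l u ∈ tailSpan x n := by
  have key : ∀ {a b : ℕ}, n ≤ a → a ≤ b →
      basisProj x f b u - basisProj x f a u ∈ tailSpan x n := by
    intro a b ha hab
    rw [basisProj_apply, basisProj_apply, ← Finset.sum_Ico_eq_sub _ hab]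
    refine mem_tailSpan_of_mem_span x (Submodule.sum_mem _ fun i hi => ?_)
    exact Submodule.smul_mem _ _
      (Submodule.subset_span ⟨i, ha.trans (Finset.mem_Ico.mp hi).1, rfl⟩)
  rcases le_total k l with h | h
  · have := key hk h
    rw [← neg_sub]
    exact Submodule.neg_mem _ this
  · exact key hl h

/-- the canonical map `J : X →L V*` with `J v = jfun V v`. -/
noncomputable def Jmap (V : Submodule ℝ (StrongDual ℝ X)) : X →L[ℝ] StrongDual ℝ ↥V :=
  ContinuousLinearMap.flip (E := ↥V) (F := X) (G := ℝ) (σ₁₃ := RingHom.id ℝ) (σ₂₃ := RingHom.id ℝ)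
    (V.subtypeL : ↥V →L[ℝ] (X →L[ℝ] ℝ))

theorem Jmap_apply (V : Submodule ℝ (StrongDual ℝ X)) (v : X) (w : ↥V) :
    Jmap V v w = (w : StrongDual ℝ X) v := rfl

theorem Jmap_eq_jfun (V : Submodule ℝ (StrongDual ℝ X)) (v : X) : Jmap V v = jfun V v := by
  ext w; rfl

theorem norm_Jmap_le (V : Submodule ℝ (StrongDual ℝ X)) (v : X) : ‖Jmap V v‖ ≤ ‖v‖ := by
  refine ContinuousLinearMap.opNorm_le_bound _ (norm_nonneg v) fun w => ?_
  change ‖(w : StrongDual ℝ X) v‖ ≤ ‖v‖ * ‖w‖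
  rw [mul_comm]
  exact (w : StrongDual ℝ X).le_opNorm v

end Bc2ShAux

namespace Bc2ShAux

variable {X : Type*} [NormedAddCommGroup X] [NormedSpace ℝ X]

open Filter Metric NormedSpace Set Topology

set_option maxHeartbeats 1000000
set_option synthInstance.maxHeartbeats 400000

/-- continuous dual, written with the normed-space instances. -/
abbrev CLMdual (E : Type*) [NormedAddCommGroup E] [NormedSpace ℝ E] : Type _ := E →L[ℝ] ℝ

/-- the sequence `(j xᵢ)` in `V*`. -/
noncomputable abbrev jseq (x : ℕ → X) (f : ℕ → X →L[ℝ] ℝ) : ℕ → CLMdual ↥(dualSpan f) :=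
  fun i => jfun (dualSpan f) (x i)

theorem jfun_mem {x : ℕ → X} {f : ℕ → X →L[ℝ] ℝ} (hb : IsSchauderBasis x f) (u : X) :
    jfun (dualSpan f) u ∈ dualSpan (E := ↥(dualSpan f)) (jseq x f) := by
  set V := dualSpan f with hV
  have hclosed : IsClosed ((dualSpan (E := ↥(dualSpan f)) (jseq x f) : Submodule ℝ (StrongDual ℝ ↥V)) :
      Set (StrongDual ℝ ↥V)) := Submodule.isClosed_topologicalClosure _
  rw [← Jmap_eq_jfun]
  have htd : Tendsto (fun n => Jmap V (basisProj x f n u)) atTop (𝓝 (Jmap V u)) :=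
    ((Jmap V).continuous.tendsto _).comp (proj_tendsto hb u)
  refine hclosed.mem_of_tendsto htd (Filter.Eventually.of_forall fun n => ?_)
  show Jmap V (basisProj x f n u) ∈ dualSpan (E := ↥(dualSpan f)) (jseq x f)
  apply Submodule.le_topologicalClosure
  rw [basisProj_apply, map_sum]
  refine Submodule.sum_mem _ fun i _ => ?_
  rw [map_smul]
  exact Submodule.smul_mem _ _ (Submodule.subset_span ⟨i, (Jmap_eq_jfun V (x i)).symm ▸ rfl⟩)

/-- the restricted map `X →L W`. -/
noncomputable def Jres {x : ℕ → X} {f : ℕ → X →L[ℝ] ℝ} (hb : IsSchauderBasis x f) :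
    X →L[ℝ] ↥(dualSpan (E := ↥(dualSpan f)) (jseq x f)) :=
  (Jmap (dualSpan f)).codRestrict _
    (fun u => by rw [Jmap_eq_jfun]; exact jfun_mem hb u)

theorem Jres_coe {x : ℕ → X} {f : ℕ → X →L[ℝ] ℝ} (hb : IsSchauderBasis x f) (u : X) :
    (Jres hb u : StrongDual ℝ ↥(dualSpan f)) = Jmap (dualSpan f) u := rfl

theorem norm_Jres_apply {x : ℕ → X} {f : ℕ → X →L[ℝ] ℝ} (hb : IsSchauderBasis x f) (u : X) :
    ‖Jres hb u‖ = ‖Jmap (dualSpan f) u‖ := rfl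

theorem Jres_x {x : ℕ → X} {f : ℕ → X →L[ℝ] ℝ} (hb : IsSchauderBasis x f) (i : ℕ) :
    Jres hb (x i) = ⟨jseq x f i, mem_dualSpan _ i⟩ :=
  Subtype.ext (Jmap_eq_jfun _ _)

/-- the functional on `X` induced by `φ ∈ W*`. -/
noncomputable def gOf {x : ℕ → X} {f : ℕ → X →L[ℝ] ℝ} (hb : IsSchauderBasis x f)
    (φ : ↥(dualSpan (E := ↥(dualSpan f)) (jseq x f)) →L[ℝ] ℝ) : X →L[ℝ] ℝ :=
  φ.comp (Jres hb)

theorem norm_gOf_le {x : ℕ → X} {f : ℕ → X →L[ℝ] ℝ} (hb : IsSchauderBasis x f)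
    {φ : ↥(dualSpan (E := ↥(dualSpan f)) (jseq x f)) →L[ℝ] ℝ} (hφ : ‖φ‖ ≤ 1) :
    ‖gOf hb φ‖ ≤ 1 := by
  refine ContinuousLinearMap.opNorm_le_bound _ zero_le_one fun u => ?_
  calc ‖φ (Jres hb u)‖ ≤ ‖φ‖ * ‖Jres hb u‖ := φ.le_opNorm _
    _ ≤ 1 * ‖u‖ := by
        refine mul_le_mul hφ ?_ (norm_nonneg _) zero_le_one
        rw [norm_Jres_apply]
        exact norm_Jmap_le _ u

theorem gOf_x {x : ℕ → X} {f : ℕ → X →L[ℝ] ℝ} (hb : IsSchauderBasis x f)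
    (φ : ↥(dualSpan (E := ↥(dualSpan f)) (jseq x f)) →L[ℝ] ℝ) (i : ℕ) :
    gOf hb φ (x i) = φ ⟨jseq x f i, mem_dualSpan _ i⟩ := by
  show φ (Jres hb (x i)) = _
  rw [Jres_x hb i]

/-- the key formula: the `bc₂`-sequence for `φ` is `gOf φ ∘ Pₙ`. -/
theorem z_coe {x : ℕ → X} {f : ℕ → X →L[ℝ] ℝ} (hb : IsSchauderBasis x f)
    (φ : ↥(dualSpan (E := ↥(dualSpan f)) (jseq x f)) →L[ℝ] ℝ) (n : ℕ) :
    ((∑ i ∈ Finset.range n,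
        φ ⟨jseq x f i, mem_dualSpan _ i⟩ •
          (⟨f i, mem_dualSpan f i⟩ : ↥(dualSpan f)) : ↥(dualSpan f)) : StrongDual ℝ X)
      = (gOf hb φ).comp (basisProj x f n) := by
  ext u
  have hrhs : (gOf hb φ).comp (basisProj x f n) u
      = ∑ i ∈ Finset.range n, f i u * gOf hb φ (x i) := by
    rw [ContinuousLinearMap.comp_apply, basisProj_apply, map_sum]
    exact Finset.sum_congr rfl fun i _ => by rw [map_smul, smul_eq_mul]
  rw [hrhs]
  rw [Submodule.coe_sum]
  rw [ContinuousLinearMap.sum_apply]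
  refine Finset.sum_congr rfl fun i _ => ?_
  rw [Submodule.coe_smul, ContinuousLinearMap.smul_apply, smul_eq_mul, gOf_x hb φ i,
    mul_comm]

theorem norm_comp_proj_sub_le {x : ℕ → X} {f : ℕ → X →L[ℝ] ℝ} (hb : IsSchauderBasis x f)
    [CompleteSpace X] {K : ℝ} (hK : K = ⨆ n : ℕ, ‖basisProj x f n‖)
    (g : X →L[ℝ] ℝ) {n k l : ℕ} (hk : n ≤ k) (hl : n ≤ l) :
    ‖g.comp (basisProj x f k) - g.comp (basisProj x f l)‖ ≤ tailNorm x g n * (2 * K) := by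
  have hK1 : (1:ℝ) ≤ K := one_le_K hb hK
  refine ContinuousLinearMap.opNorm_le_bound _
    (mul_nonneg (tailNorm_nonneg x g n) (by linarith)) fun u => ?_
  have h1 : ‖(g.comp (basisProj x f k) - g.comp (basisProj x f l)) u‖
      = |g (basisProj x f k u - basisProj x f l u)| := by
    rw [ContinuousLinearMap.sub_apply, ContinuousLinearMap.comp_apply,
      ContinuousLinearMap.comp_apply, ← map_sub]
    rfl
  rw [h1]
  calc |g (basisProj x f k u - basisProj x f l u)|
      ≤ tailNorm x g n * ‖basisProj x f k u - basisProj x f l u‖ :=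
        apply_le_tailNorm (proj_sub_mem hk hl u)
    _ ≤ tailNorm x g n * (2 * K * ‖u‖) := by
        refine mul_le_mul_of_nonneg_left ?_ (tailNorm_nonneg x g n)
        calc ‖basisProj x f k u - basisProj x f l u‖
            ≤ ‖basisProj x f k u‖ + ‖basisProj x f l u‖ := norm_sub_le _ _
          _ ≤ K * ‖u‖ + K * ‖u‖ := add_le_add
              (((basisProj x f k).le_opNorm u).trans
                (mul_le_mul_of_nonneg_right (norm_proj_le hb hK k) (norm_nonneg u)))
              (((basisProj x f l).le_opNorm u).trans
                (mul_le_mul_of_nonneg_right (norm_proj_le hb hK l) (norm_nonneg u)))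
          _ = 2 * K * ‖u‖ := by ring
    _ = tailNorm x g n * (2 * K) * ‖u‖ := by ring

end Bc2ShAux

namespace Bc2ShAux

variable {X : Type*} [NormedAddCommGroup X] [NormedSpace ℝ X]

open Filter Metric NormedSpace Set Topology

set_option maxHeartbeats 1000000
set_option synthInstance.maxHeartbeats 400000

section ZSeq

variable {x : ℕ → X} {f : ℕ → X →L[ℝ] ℝ}

/-- the `bc₂` partial-sum sequence associated to `φ`. -/
noncomputable def zseq (x : ℕ → X) (f : ℕ → X →L[ℝ] ℝ)
    (φ : ↥(dualSpan (E := ↥(dualSpan f)) (jseq x f)) →L[ℝ] ℝ) (n : ℕ) :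
    ↥(dualSpan f) :=
  ∑ i ∈ Finset.range n,
    φ ⟨jseq x f i, mem_dualSpan _ i⟩ •
      (⟨f i, mem_dualSpan f i⟩ : ↥(dualSpan f))

theorem zseq_coe {x : ℕ → X} {f : ℕ → X →L[ℝ] ℝ} (hb : IsSchauderBasis x f)
    (φ : ↥(dualSpan (E := ↥(dualSpan f)) (jseq x f)) →L[ℝ] ℝ) (n : ℕ) :
    ((zseq x f φ n : ↥(dualSpan f)) : StrongDual ℝ X) = (gOf hb φ).comp (basisProj x f n) :=
  z_coe hb φ n

theorem zseq_sub_norm (hb : IsSchauderBasis x f)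
    (φ : ↥(dualSpan (E := ↥(dualSpan f)) (jseq x f)) →L[ℝ] ℝ) (k l : ℕ) :
    ‖zseq x f φ k - zseq x f φ l‖
      = ‖(gOf hb φ).comp (basisProj x f k) - (gOf hb φ).comp (basisProj x f l)‖ := by
  have : ((zseq x f φ k - zseq x f φ l : ↥(dualSpan f)) : StrongDual ℝ X)
      = (gOf hb φ).comp (basisProj x f k) - (gOf hb φ).comp (basisProj x f l) := by
    rw [AddSubgroupClass.coe_sub]
    rw [show ((zseq x f φ k : ↥(dualSpan f)) : StrongDual ℝ X)
        = (gOf hb φ).comp (basisProj x f k) from z_coe hb φ k]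
    rw [show ((zseq x f φ l : ↥(dualSpan f)) : StrongDual ℝ X)
        = (gOf hb φ).comp (basisProj x f l) from z_coe hb φ l]
  rw [← this]
  rfl

theorem zseq_sub_le (hb : IsSchauderBasis x f) [CompleteSpace X] {K : ℝ}
    (hK : K = ⨆ n : ℕ, ‖basisProj x f n‖)
    (φ : ↥(dualSpan (E := ↥(dualSpan f)) (jseq x f)) →L[ℝ] ℝ)
    {n k l : ℕ} (hk : n ≤ k) (hl : n ≤ l) :
    ‖zseq x f φ k - zseq x f φ l‖ ≤ tailNorm x (gOf hb φ) n * (2 * K) := by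
  rw [zseq_sub_norm hb]
  exact norm_comp_proj_sub_le hb hK _ hk hl

theorem ca_zseq_le (hb : IsSchauderBasis x f) [CompleteSpace X] {K : ℝ}
    (hK : K = ⨆ n : ℕ, ‖basisProj x f n‖)
    {φ : ↥(dualSpan (E := ↥(dualSpan f)) (jseq x f)) →L[ℝ] ℝ} (hφ : ‖φ‖ ≤ 1) :
    ca (zseq x f φ) ≤ 2 * K * sh x := by
  have hK1 : (1:ℝ) ≤ K := one_le_K hb hK
  set g := gOf hb φ with hg
  have hgle : ‖g‖ ≤ 1 := norm_gOf_le hb hφ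
  set D : ℕ → Set ℝ :=
    fun n => {d : ℝ | ∃ k, n ≤ k ∧ ∃ l, n ≤ l ∧ d = ‖zseq x f φ k - zseq x f φ l‖} with hD
  have h2K : (0:ℝ) ≤ 2 * K := by linarith
  have hDb : ∀ n, ∀ d ∈ D n, d ≤ tailNorm x g n * (2 * K) := by
    rintro n d ⟨k, hk, l, hl, rfl⟩
    exact zseq_sub_le hb hK φ hk hl
  have hD0 : ∀ n, (0:ℝ) ∈ D n := fun n => ⟨n, le_rfl, n, le_rfl, by rw [show zseq x f φ n - zseq x f φ n = 0 from @sub_self ↥(dualSpan f) _ _]; exact (@norm_zero ↥(dualSpan f) _).symm⟩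
  have hDs : ∀ n, sSup (D n) ≤ tailNorm x g n * (2 * K) := fun n =>
    Real.sSup_le (hDb n) (mul_nonneg (tailNorm_nonneg x g n) h2K)
  have hca : ca (zseq x f φ) ≤ ⨅ n, tailNorm x g n * (2 * K) := by
    refine ciInf_mono ⟨0, ?_⟩ hDs
    rintro - ⟨n, rfl⟩
    exact le_csSup ⟨tailNorm x g n * (2 * K), hDb n⟩ (hD0 n)
  have heq : (⨅ n, tailNorm x g n * (2 * K)) = 2 * K * ⨅ n, tailNorm x g n := by
    rw [Real.mul_iInf_of_nonneg h2K]
    exact iInf_congr fun n => mul_comm _ _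
  rw [heq] at hca
  refine hca.trans (mul_le_mul_of_nonneg_left ?_ h2K)
  rw [← limsup_tailNorm_eq]
  exact limsup_le_sh x hgle

theorem bc2_le_two_K_sh (hb : IsSchauderBasis x f) [CompleteSpace X] {K : ℝ}
    (hK : K = ⨆ n : ℕ, ‖basisProj x f n‖) :
    bc2 (fun i => (⟨f i, mem_dualSpan f i⟩ : ↥(dualSpan f)))
      (jseq x f) ≤ 2 * K * sh x := by
  have hK1 : (1:ℝ) ≤ K := one_le_K hb hK
  refine Real.sSup_le ?_ (mul_nonneg (by linarith) (sh_nonneg x))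
  rintro c ⟨φ, hφ, rfl⟩
  exact ca_zseq_le hb hK hφ

end ZSeq

end Bc2ShAux

namespace Bc2ShAux

variable {X : Type*} [NormedAddCommGroup X] [NormedSpace ℝ X]

open Filter Metric NormedSpace Set Topology

set_option maxHeartbeats 1000000
set_option synthInstance.maxHeartbeats 400000

section Lower

variable {x : ℕ → X} {f : ℕ → X →L[ℝ] ℝ}

theorem comp_proj_mem_dualSpan (hb : IsSchauderBasis x f) (xs : X →L[ℝ] ℝ) (n : ℕ) :
    xs.comp (basisProj x f n) ∈ dualSpan f := by
  have hform : xs.comp (basisProj x f n) = ∑ i ∈ Finset.range n, xs (x i) • f i := by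
    ext u
    rw [ContinuousLinearMap.comp_apply, basisProj_apply, map_sum,
      ContinuousLinearMap.sum_apply]
    refine Finset.sum_congr rfl fun i _ => ?_
    rw [map_smul, ContinuousLinearMap.smul_apply, smul_eq_mul, smul_eq_mul, mul_comm]
  rw [hform]
  apply Submodule.le_topologicalClosure
  exact Submodule.sum_mem _ fun i _ =>
    Submodule.smul_mem _ _ (Submodule.subset_span ⟨i, rfl⟩)

theorem norm_le_K_mul_norm_Jmap (hb : IsSchauderBasis x f) [CompleteSpace X] {K : ℝ}
    (hK : K = ⨆ n : ℕ, ‖basisProj x f n‖) (u : X) :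
    ‖u‖ ≤ K * ‖Jmap (dualSpan f) u‖ := by
  have hK1 : (1:ℝ) ≤ K := one_le_K hb hK
  have key : ∀ n, ‖basisProj x f n u‖ ≤ K * ‖Jmap (dualSpan f) u‖ := by
    intro n
    by_cases h : basisProj x f n u = 0
    · rw [h, norm_zero]
      exact mul_nonneg (by linarith) (norm_nonneg _)
    obtain ⟨xs, hxs1, hxsa⟩ := exists_dual_vector ℝ (basisProj x f n u) (norm_ne_zero_iff.mpr h)
    have hmem : xs.comp (basisProj x f n) ∈ dualSpan f := comp_proj_mem_dualSpan hb xs n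
    have hnorm : ‖xs.comp (basisProj x f n)‖ ≤ K := by
      refine (ContinuousLinearMap.opNorm_comp_le _ _).trans ?_
      rw [hxs1, one_mul]
      exact norm_proj_le hb hK n
    have happ : Jmap (dualSpan f) u ⟨xs.comp (basisProj x f n), hmem⟩
        = xs (basisProj x f n u) := rfl
    have hle := ContinuousLinearMap.le_opNorm (E := ↥(dualSpan f)) (F := ℝ) (σ₁₂ := RingHom.id ℝ)
      (Jmap (dualSpan f) u)
      (⟨xs.comp (basisProj x f n), hmem⟩ : ↥(dualSpan f))
    rw [happ] at hle
    have hnorm_sub : ‖(⟨xs.comp (basisProj x f n), hmem⟩ : ↥(dualSpan f))‖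
        = ‖xs.comp (basisProj x f n)‖ := rfl
    rw [hnorm_sub] at hle
    calc ‖basisProj x f n u‖ = xs (basisProj x f n u) := by rw [hxsa]; rfl
      _ ≤ ‖xs (basisProj x f n u)‖ := le_abs_self _
      _ ≤ ‖Jmap (dualSpan f) u‖ * ‖xs.comp (basisProj x f n)‖ := hle
      _ ≤ ‖Jmap (dualSpan f) u‖ * K :=
          mul_le_mul_of_nonneg_left hnorm (norm_nonneg _)
      _ = K * ‖Jmap (dualSpan f) u‖ := mul_comm _ _
  exact le_of_tendsto (proj_tendsto hb u).norm (Filter.Eventually.of_forall key)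

theorem Jres_injective (hb : IsSchauderBasis x f) [CompleteSpace X] {K : ℝ}
    (hK : K = ⨆ n : ℕ, ‖basisProj x f n‖) : Function.Injective (Jres hb) := by
  intro u v huv
  have h : Jmap (dualSpan f) u = Jmap (dualSpan f) v := congrArg Subtype.val huv
  have := norm_le_K_mul_norm_Jmap hb hK (u - v)
  rw [map_sub, h, sub_self, norm_zero, mul_zero] at this
  exact sub_eq_zero.mp (norm_le_zero_iff.mp this)

theorem Jres_surjective (hb : IsSchauderBasis x f) [CompleteSpace X] {K : ℝ}
    (hK : K = ⨆ n : ℕ, ‖basisProj x f n‖) : Function.Surjective (Jres hb) := by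
  have hK1 : (1:ℝ) ≤ K := one_le_K hb hK
  have hKpos : (0:ℝ) < K := lt_of_lt_of_le one_pos hK1
  have hanti : AntilipschitzWith (Real.toNNReal K) (Jmap (dualSpan f)) := by
    rw [antilipschitzWith_iff_le_mul_dist]
    intro u v
    rw [dist_eq_norm, dist_eq_norm, ← map_sub, Real.coe_toNNReal _ hKpos.le]
    exact norm_le_K_mul_norm_Jmap hb hK (u - v)
  have hclosed : IsClosed (Set.range (Jmap (dualSpan f))) :=
    hanti.isClosed_range (Jmap (dualSpan f)).uniformContinuous
  have hle : dualSpan (E := ↥(dualSpan f)) (jseq x f)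
      ≤ LinearMap.range ((Jmap (dualSpan f)) : X →ₗ[ℝ] StrongDual ℝ ↥(dualSpan f)) := by
    refine Submodule.topologicalClosure_minimal _ ?_ ?_
    · rw [Submodule.span_le]
      rintro - ⟨i, rfl⟩
      exact ⟨x i, Jmap_eq_jfun (dualSpan f) (x i)⟩
    · have : (LinearMap.range ((Jmap (dualSpan f)) : X →ₗ[ℝ] StrongDual ℝ ↥(dualSpan f)) :
          Set (StrongDual ℝ ↥(dualSpan f))) = Set.range (Jmap (dualSpan f)) := by
        rw [LinearMap.coe_range]
        rfl
      rw [this]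
      exact hclosed
  rintro ⟨w, hw⟩
  obtain ⟨u, hu⟩ := hle hw
  exact ⟨u, Subtype.ext hu⟩

/-- building a norming functional on `W` from one on `X`. -/
theorem exists_phi (hb : IsSchauderBasis x f) [CompleteSpace X] {K : ℝ}
    (hK : K = ⨆ n : ℕ, ‖basisProj x f n‖) {g : X →L[ℝ] ℝ} (hg : ‖g‖ ≤ 1) :
    ∃ φ : ↥(dualSpan (E := ↥(dualSpan f)) (jseq x f)) →L[ℝ] ℝ, ‖φ‖ ≤ 1 ∧
      gOf hb φ = K⁻¹ • g := by
  have hK1 : (1:ℝ) ≤ K := one_le_K hb hK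
  have hKpos : (0:ℝ) < K := lt_of_lt_of_le one_pos hK1
  let e : X ≃ₗ[ℝ] ↥(dualSpan (E := ↥(dualSpan f)) (jseq x f)) :=
    LinearEquiv.ofBijective ((Jres hb) : X →ₗ[ℝ] _)
      ⟨Jres_injective hb hK, Jres_surjective hb hK⟩
  have he_apply : ∀ u : X, e u = Jres hb u := fun u => rfl
  have hbound : ∀ w, ‖(K⁻¹ • (g.toLinearMap ∘ₗ e.symm.toLinearMap)) w‖ ≤ 1 * ‖w‖ := by
    intro w
    set u := e.symm w with hu
    have hw : w = Jres hb u := by rw [hu, ← he_apply, e.apply_symm_apply]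
    have h1 : ‖(K⁻¹ • (g.toLinearMap ∘ₗ e.symm.toLinearMap)) w‖ = K⁻¹ * ‖g u‖ := by
      rw [LinearMap.smul_apply, norm_smul, Real.norm_eq_abs,
        abs_of_pos (inv_pos.mpr hKpos)]
      rfl
    rw [h1, one_mul]
    have h2 : ‖g u‖ ≤ ‖u‖ := by
      refine (g.le_opNorm u).trans ?_
      calc ‖g‖ * ‖u‖ ≤ 1 * ‖u‖ := mul_le_mul_of_nonneg_right hg (norm_nonneg u)
        _ = ‖u‖ := one_mul _
    have h3 : ‖u‖ ≤ K * ‖w‖ := by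
      rw [hw, norm_Jres_apply]
      exact norm_le_K_mul_norm_Jmap hb hK u
    calc K⁻¹ * ‖g u‖ ≤ K⁻¹ * (K * ‖w‖) :=
          mul_le_mul_of_nonneg_left (h2.trans h3) (inv_pos.mpr hKpos).le
      _ = ‖w‖ := by field_simp
  refine ⟨LinearMap.mkContinuous _ 1 hbound, LinearMap.mkContinuous_norm_le _ zero_le_one _, ?_⟩
  ext u
  show (K⁻¹ • (g.toLinearMap ∘ₗ e.symm.toLinearMap)) (Jres hb u) = (K⁻¹ • g) u
  rw [LinearMap.smul_apply, ContinuousLinearMap.smul_apply]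
  congr 1
  show g (e.symm (e u)) = g u
  rw [e.symm_apply_apply]

end Lower

end Bc2ShAux

namespace Bc2ShAux

variable {X : Type*} [NormedAddCommGroup X] [NormedSpace ℝ X]

open Filter Metric NormedSpace Set Topology

set_option maxHeartbeats 1000000
set_option synthInstance.maxHeartbeats 400000

section Final

variable {x : ℕ → X} {f : ℕ → X →L[ℝ] ℝ}

theorem exists_proj_fix (hb : IsSchauderBasis x f) {n : ℕ} {v : X}
    (hv : v ∈ Submodule.span ℝ (x '' {i | n ≤ i})) :
    ∃ m, ∀ p ≥ m, basisProj x f p v = v := by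
  induction hv using Submodule.span_induction with
  | mem w hw =>
      obtain ⟨i, _, rfl⟩ := hw
      exact ⟨i + 1, fun p hp => proj_x hb (lt_of_lt_of_le (Nat.lt_succ_self i) hp)⟩
  | zero => exact ⟨0, fun p _ => map_zero _⟩
  | add a b _ _ iha ihb =>
      obtain ⟨ma, hma⟩ := iha
      obtain ⟨mb, hmb⟩ := ihb
      exact ⟨max ma mb, fun p hp => by
        rw [map_add, hma p (le_trans (le_max_left _ _) hp),
          hmb p (le_trans (le_max_right _ _) hp)]⟩
  | smul c a _ iha =>
      obtain ⟨ma, hma⟩ := iha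
      exact ⟨ma, fun p hp => by rw [map_smul, hma p hp]⟩

theorem tailNorm_le_sSup_zseq (hb : IsSchauderBasis x f) [CompleteSpace X] {K : ℝ}
    (hK : K = ⨆ n : ℕ, ‖basisProj x f n‖)
    (φ : ↥(dualSpan (E := ↥(dualSpan f)) (jseq x f)) →L[ℝ] ℝ) (n : ℕ) :
    tailNorm x (gOf hb φ) n
      ≤ sSup {d : ℝ | ∃ k, n ≤ k ∧ ∃ l, n ≤ l ∧ d = ‖zseq x f φ k - zseq x f φ l‖} := by
  set g := gOf hb φ with hgdef
  set D := {d : ℝ | ∃ k, n ≤ k ∧ ∃ l, n ≤ l ∧ d = ‖zseq x f φ k - zseq x f φ l‖} with hDdef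
  have hDbdd : BddAbove D := by
    refine ⟨tailNorm x g 0 * (2 * K), ?_⟩
    rintro d ⟨k, hk, l, hl, rfl⟩
    exact zseq_sub_le hb hK φ (Nat.zero_le k) (Nat.zero_le l)
  have key : ∀ c, c < tailNorm x g n → ∃ d ∈ D, c ≤ d := by
    intro c hc
    rcases lt_or_ge c 0 with hc0 | hc0
    · exact ⟨0, ⟨n, le_rfl, n, le_rfl, by rw [show zseq x f φ n - zseq x f φ n = 0 from @sub_self ↥(dualSpan f) _ _]; exact (@norm_zero ↥(dualSpan f) _).symm⟩, hc0.le⟩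
    -- find an almost-norming vector in the closed tail span
    obtain ⟨v, hv1, hvc⟩ :=
      (g.comp (tailSpan x n).subtypeL).exists_lt_apply_of_lt_opNorm hc
    have hgv : c < ‖g (v : X)‖ := hvc
    -- approximate by an element of the algebraic span
    have hvmem : (v : X) ∈ closure (Submodule.span ℝ (x '' {i | n ≤ i}) : Set X) := by
      have := v.2
      rw [tailSpan, ← Submodule.topologicalClosure_coe] at *
      exact this
    set δ := min (1 - ‖(v : X)‖) ((‖g (v : X)‖ - c) / (‖g‖ + 1)) with hδ
    have hδpos : 0 < δ := by
      refine lt_min (by simpa using hv1) ?_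
      apply div_pos (by linarith) (by positivity)
    obtain ⟨v', hv'mem, hv'close⟩ := Metric.mem_closure_iff.mp hvmem δ hδpos
    have hvv' : ‖(v : X) - v'‖ < δ := by rwa [← dist_eq_norm]
    have hv'1 : ‖v'‖ ≤ 1 := by
      have h1 : ‖v'‖ ≤ ‖(v : X)‖ + ‖(v : X) - v'‖ := by
        calc ‖v'‖ = ‖(v:X) - ((v:X) - v')‖ := by rw [sub_sub_cancel]
          _ ≤ ‖(v : X)‖ + ‖(v : X) - v'‖ := norm_sub_le _ _
      have h2 : ‖(v : X) - v'‖ ≤ 1 - ‖(v : X)‖ := hvv'.le.trans (min_le_left _ _)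
      linarith
    have hgv' : c ≤ ‖g v'‖ := by
      have h1 : ‖g (v : X) - g v'‖ ≤ ‖g‖ * ‖(v : X) - v'‖ := by
        rw [← map_sub]; exact g.le_opNorm _
      have h2 : ‖g‖ * ‖(v : X) - v'‖ ≤ ‖g‖ * δ :=
        mul_le_mul_of_nonneg_left hvv'.le (norm_nonneg g)
      have h3 : ‖g‖ * δ ≤ ‖g (v : X)‖ - c := by
        have hδle : δ ≤ (‖g (v : X)‖ - c) / (‖g‖ + 1) := min_le_right _ _
        have : ‖g‖ * δ ≤ ‖g‖ * ((‖g (v : X)‖ - c) / (‖g‖ + 1)) :=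
          mul_le_mul_of_nonneg_left hδle (norm_nonneg g)
        refine this.trans ?_
        rw [mul_div_assoc']
        rw [div_le_iff₀ (by positivity)]
        nlinarith [norm_nonneg g, hgv, hc0]
      have h4 : ‖g (v : X)‖ - ‖g v'‖ ≤ ‖g (v : X) - g v'‖ := by
        have := norm_sub_norm_le (g (v : X)) (g v')
        simpa using this
      linarith
    -- a tail index fixing `v'`
    obtain ⟨m, hm⟩ := exists_proj_fix hb hv'mem
    set k := max m n with hk
    have hPk : basisProj x f k v' = v' := hm k (le_max_left _ _)
    have hPn : basisProj x f n v' = 0 :=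
      proj_eq_zero_on_tail hb (mem_tailSpan_of_mem_span x hv'mem)
    have happ : ((zseq x f φ k - zseq x f φ n : ↥(dualSpan f)) : StrongDual ℝ X) v' = g v' := by
      rw [AddSubgroupClass.coe_sub, ContinuousLinearMap.sub_apply,
        zseq_coe hb φ k, zseq_coe hb φ n, ContinuousLinearMap.comp_apply,
        ContinuousLinearMap.comp_apply, hPk, hPn, map_zero, sub_zero]
    refine ⟨‖zseq x f φ k - zseq x f φ n‖, ⟨k, le_max_right _ _, n, le_rfl, rfl⟩, ?_⟩
    have h5 : ‖g v'‖ ≤ ‖zseq x f φ k - zseq x f φ n‖ * ‖v'‖ := by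
      rw [← happ]
      exact ((zseq x f φ k - zseq x f φ n : ↥(dualSpan f)) : StrongDual ℝ X).le_opNorm v'
    refine hgv'.trans (h5.trans ?_)
    exact mul_le_of_le_one_right (@norm_nonneg ↥(dualSpan f) _ _) hv'1
  by_contra hlt
  push_neg at hlt
  obtain ⟨d, hdD, hcd⟩ := key ((sSup D + tailNorm x g n) / 2) (by linarith)
  have := le_csSup hDbdd hdD
  linarith

theorem ca_zseq_zero (hb : IsSchauderBasis x f) :
    ca (zseq x f 0) = 0 := by
  have hz : ∀ n, zseq x f 0 n = 0 := fun n =>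
    Finset.sum_eq_zero fun i _ => by
      rw [ContinuousLinearMap.zero_apply, zero_smul]
  have hD : ∀ n : ℕ, {d : ℝ | ∃ k, n ≤ k ∧ ∃ l, n ≤ l ∧ d = ‖zseq x f 0 k - zseq x f 0 l‖}
      = {(0:ℝ)} := by
    intro n
    ext d
    constructor
    · rintro ⟨k, hk, l, hl, rfl⟩
      rw [hz k, hz l, show (0:↥(dualSpan f)) - 0 = 0 from @sub_self ↥(dualSpan f) _ _]
      exact (@norm_zero ↥(dualSpan f) _)
    · rintro rfl
      exact ⟨n, le_rfl, n, le_rfl, by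
        rw [hz n, show (0:↥(dualSpan f)) - 0 = 0 from @sub_self ↥(dualSpan f) _ _]
        exact (@norm_zero ↥(dualSpan f) _).symm⟩
  unfold ca
  rw [show (fun n : ℕ => sSup {d : ℝ | ∃ k, n ≤ k ∧ ∃ l, n ≤ l ∧
      d = ‖zseq x f 0 k - zseq x f 0 l‖}) = fun n : ℕ => (0:ℝ) by
    funext n; rw [hD n, csSup_singleton]]
  exact ciInf_const

end Final

end Bc2ShAux

namespace Bc2ShAux

variable {X : Type*} [NormedAddCommGroup X] [NormedSpace ℝ X]

open Filter Metric NormedSpace Set Topology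

set_option maxHeartbeats 1000000
set_option synthInstance.maxHeartbeats 400000

section Assemble

variable {x : ℕ → X} {f : ℕ → X →L[ℝ] ℝ}

theorem bc2_bddAbove (hb : IsSchauderBasis x f) [CompleteSpace X] {K : ℝ}
    (hK : K = ⨆ n : ℕ, ‖basisProj x f n‖) :
    BddAbove {c : ℝ | ∃ φ : ↥(dualSpan (E := ↥(dualSpan f)) (jseq x f)) →L[ℝ] ℝ,
      ‖φ‖ ≤ 1 ∧ c = ca (zseq x f φ)} := by
  refine ⟨2 * K * sh x, ?_⟩
  rintro c ⟨φ, hφ, rfl⟩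
  exact ca_zseq_le hb hK hφ

theorem bc2_nonneg (hb : IsSchauderBasis x f) [CompleteSpace X] {K : ℝ}
    (hK : K = ⨆ n : ℕ, ‖basisProj x f n‖) :
    0 ≤ bc2 (fun i => (⟨f i, mem_dualSpan f i⟩ : ↥(dualSpan f)))
      (jseq x f) := by
  have h0 : (0:ℝ) ∈ {c : ℝ | ∃ φ : ↥(dualSpan (E := ↥(dualSpan f)) (jseq x f)) →L[ℝ] ℝ,
      ‖φ‖ ≤ 1 ∧ c = ca (zseq x f φ)} :=
    ⟨0, le_of_eq_of_le (@norm_zero (↥(dualSpan (E := ↥(dualSpan f)) (jseq x f)) →L[ℝ] ℝ) _)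
      zero_le_one, (ca_zseq_zero hb).symm⟩
  exact le_csSup (bc2_bddAbove hb hK) h0

theorem main (hb : IsSchauderBasis x f) [CompleteSpace X] {K : ℝ}
    (hK : K = ⨆ n : ℕ, ‖basisProj x f n‖) :
    (1 / (2 * K)) *
        bc2 (fun i => (⟨f i, mem_dualSpan f i⟩ : ↥(dualSpan f)))
          (jseq x f) ≤ sh x ∧
    sh x ≤ K * bc2 (fun i => (⟨f i, mem_dualSpan f i⟩ : ↥(dualSpan f)))
          (jseq x f) := by
  have hK1 : (1:ℝ) ≤ K := one_le_K hb hK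
  have hKpos : (0:ℝ) < K := by linarith
  constructor
  · have h1 := bc2_le_two_K_sh hb hK
    have h2 : (1/(2*K)) * bc2 (fun i => (⟨f i, mem_dualSpan f i⟩ : ↥(dualSpan f)))
        (jseq x f) ≤ (1/(2*K)) * (2 * K * sh x) :=
      mul_le_mul_of_nonneg_left h1 (by positivity)
    refine h2.trans (le_of_eq ?_)
    field_simp
  · refine Real.sSup_le ?_ (mul_nonneg hKpos.le (bc2_nonneg hb hK))
    rintro s ⟨g, hg, rfl⟩
    dsimp only
    rw [limsup_tailNorm_eq]
    obtain ⟨φ, hφ, hgOf⟩ := exists_phi hb hK hg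
    have htail : ∀ n, K⁻¹ * tailNorm x g n ≤ tailNorm x (gOf hb φ) n := by
      intro n
      rw [hgOf]
      unfold tailNorm
      rw [ContinuousLinearMap.smul_comp]
      set F := g.comp (tailSpan x n).subtypeL with hF
      have h1 : ‖F‖ ≤ K * ‖K⁻¹ • F‖ := by
        have h2 : F = K • K⁻¹ • F := by
          rw [smul_smul, mul_inv_cancel₀ hKpos.ne', one_smul]
        calc ‖F‖ = ‖K • K⁻¹ • F‖ := by rw [← h2]
          _ ≤ ‖K‖ * ‖K⁻¹ • F‖ := ContinuousLinearMap.opNorm_smul_le _ _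
          _ = K * ‖K⁻¹ • F‖ := by rw [Real.norm_eq_abs, abs_of_pos hKpos]
      calc K⁻¹ * ‖F‖ ≤ K⁻¹ * (K * ‖K⁻¹ • F‖) :=
            mul_le_mul_of_nonneg_left h1 (inv_pos.mpr hKpos).le
        _ = ‖K⁻¹ • F‖ := by field_simp
    have hlow : K⁻¹ * (⨅ n, tailNorm x g n) ≤ ca (zseq x f φ) := by
      unfold ca
      refine le_ciInf fun n => ?_
      have h2 := tailNorm_le_sSup_zseq hb hK φ n
      refine le_trans (le_trans ?_ (htail n)) h2
      exact mul_le_mul_of_nonneg_left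
        (ciInf_le ⟨0, fun _ ⟨m, hm⟩ => hm ▸ tailNorm_nonneg x g m⟩ n)
        (inv_pos.mpr hKpos).le
    have hmem : ca (zseq x f φ) ≤ bc2 (fun i => (⟨f i, mem_dualSpan f i⟩ : ↥(dualSpan f)))
        (jseq x f) :=
      le_csSup (bc2_bddAbove hb hK) ⟨φ, hφ, rfl⟩
    have h3 := hlow.trans hmem
    calc (⨅ n, tailNorm x g n) = K * (K⁻¹ * ⨅ n, tailNorm x g n) := by field_simp
      _ ≤ K * bc2 (fun i => (⟨f i, mem_dualSpan f i⟩ : ↥(dualSpan f)))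
          (jseq x f) := mul_le_mul_of_nonneg_left h3 hKpos.le

end Assemble

end Bc2ShAux

/-- Theorem 4.6: `(1/(2K))·bc₂((x*ₙ)) ≤ sh((xₙ)) ≤ K·bc₂((x*ₙ))`, where
`bc₂((x*ₙ))` is computed for the basic sequence `(x*ₙ)` in `V` whose biorthogonal
functionals are `(j xₙ) ⊆ V*`. -/
theorem bc2_dual_le_sh_le {X : Type*} [NormedAddCommGroup X] [NormedSpace ℝ X]
    [CompleteSpace X] (hinf : ¬ FiniteDimensional ℝ X)
    (x : ℕ → X) (f : ℕ → X →L[ℝ] ℝ) (hb : IsSchauderBasis x f)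
    (K : ℝ) (hK : K = ⨆ n : ℕ, ‖basisProj x f n‖) :
    (1 / (2 * K)) *
        bc2 (fun i => (⟨f i, mem_dualSpan f i⟩ : ↥(dualSpan f)))
          (fun i => jfun (dualSpan f) (x i)) ≤ sh x ∧
    sh x ≤ K * bc2 (fun i => (⟨f i, mem_dualSpan f i⟩ : ↥(dualSpan f)))
          (fun i => jfun (dualSpan f) (x i)) :=
  Bc2ShAux.main hb hK
end

section
/- Let c be the Banach space of convergent real sequences with the sup norm, let e₀ = (1,1,1,…) and let (e_n)_{n≥1} be the standard unit vectors, so that (e_n)_{n=0}^∞ is a Schauder basis of c satisfying ‖Σ_{i=0}^n a_i e_i‖ = max(|a₀|, |a₀+a₁|, …, |a₀+a_n|). Then bc₁((e_n)_{n=0}^∞) = 2. -/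
set_option synthInstance.maxHeartbeats 1000000
set_option maxHeartbeats 1000000


open Filter Metric NormedSpace Set Topology

noncomputable section

/-- the space `ℓ∞` of bounded real sequences. -/
abbrev linf : Type := lp (fun _ : ℕ => ℝ) ⊤

/-- the space `c` of convergent real sequences, as a subspace of `ℓ∞`
(with the sup norm). -/
def convSp : Submodule ℝ linf where
  carrier := {g | ∃ l : ℝ, Tendsto (fun k => (g : ℕ → ℝ) k) atTop (𝓝 l)}
  zero_mem' := ⟨0, by simpa using tendsto_const_nhds⟩
  add_mem' := by
    rintro g h ⟨l, hl⟩ ⟨m, hm⟩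
    exact ⟨l + m, by simpa using hl.add hm⟩
  smul_mem' := by
    rintro r g ⟨l, hl⟩
    exact ⟨r * l, by simpa using hl.const_mul r⟩

/-- the constant sequence `(1,1,1,…)` as an element of `ℓ∞`. -/
def oneSeq : linf :=
  ⟨fun _ => (1 : ℝ), memℓp_infty ⟨1, by rintro r ⟨i, rfl⟩; simp⟩⟩

/-- the basis `(eₙ)_{n=0}^∞` of `c`: `e₀ = (1,1,1,…)` and, for `n ≥ 1`, `eₙ` is the
`n`-th standard unit vector. -/
def cBasis : ℕ → ↥convSp
  | 0 => ⟨oneSeq, ⟨1, by simpa [oneSeq] using tendsto_const_nhds⟩⟩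
  | (m + 1) => ⟨lp.single ⊤ m (1 : ℝ), ⟨0, by
      refine Tendsto.congr' ?_ tendsto_const_nhds
      filter_upwards [eventually_ge_atTop (m + 1)] with k hk
      have hkm : k ≠ m := by omega
      simp [lp.single, hkm]⟩⟩

def aaX : ℕ → ℝ := fun n => if n = 0 then 1 else -2

lemma cBasis_coord (i k : ℕ) : ((cBasis i : linf) : ℕ → ℝ) k =
    if i = 0 then 1 else if k + 1 = i then 1 else 0 := by
  match i with
  | 0 => simp [cBasis, oneSeq]
  | m + 1 =>
    simp only [cBasis]
    by_cases h : k = m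
    · subst h; rw [lp.single_apply_self]; simp
    · rw [lp.single_apply_ne _ _ _ h]
      have : ¬ (k + 1 = m + 1) := by omega
      simp [this, h]

lemma sum_coord (a : ℕ → ℝ) (n k : ℕ) :
    (((∑ i ∈ Finset.range n, a i • cBasis i : ↥convSp) : linf) : ℕ → ℝ) k
      = ∑ i ∈ Finset.range n, a i * ((cBasis i : linf) : ℕ → ℝ) k := by
  have h1 : ((∑ i ∈ Finset.range n, a i • cBasis i : ↥convSp) : linf)
      = ∑ i ∈ Finset.range n, a i • (cBasis i : linf) := by
    push_cast
    rfl
  rw [h1, lp.coeFn_sum, Finset.sum_apply]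
  simp [lp.coeFn_smul]

lemma zz_coord (n k : ℕ) :
    (((∑ i ∈ Finset.range n, aaX i • cBasis i : ↥convSp) : linf) : ℕ → ℝ) k
      = if n = 0 then 0 else if k + 1 < n then -1 else 1 := by
  rw [sum_coord]
  match n with
  | 0 => simp
  | m + 1 =>
    rw [Finset.sum_range_succ']
    have h0 : aaX 0 * ((cBasis 0 : linf) : ℕ → ℝ) k = 1 := by
      rw [cBasis_coord]; simp [aaX]
    have hj : ∀ j, aaX (j+1) * ((cBasis (j+1) : linf) : ℕ → ℝ) k
        = if k = j then -2 else 0 := by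
      intro j
      rw [cBasis_coord]
      have : (k + 1 = j + 1) ↔ (k = j) := by omega
      by_cases h : k = j <;> simp [aaX, this, h]
    rw [h0]
    simp only [hj]
    rw [Finset.sum_ite_eq]
    by_cases h : k < m
    · simp only [Finset.mem_range, h, if_true, show k + 1 < m + 1 by omega]
      norm_num
    · have : ¬ (k + 1 < m + 1) := by omega
      simp [Finset.mem_range, h, this]

lemma norm_zz_le (n : ℕ) : ‖(∑ i ∈ Finset.range n, aaX i • cBasis i : ↥convSp)‖ ≤ 1 := by
  rw [← Submodule.norm_coe]
  apply lp.norm_le_of_forall_le zero_le_one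
  intro k
  rw [zz_coord]
  split_ifs <;> norm_num

lemma norm_cBasis_succ (n : ℕ) : ‖cBasis (n + 1)‖ = 1 := by
  rw [← Submodule.norm_coe]
  refine le_antisymm (lp.norm_le_of_forall_le zero_le_one ?_) ?_
  · intro k
    show ‖(lp.single ⊤ n (1:ℝ) : ℕ → ℝ) k‖ ≤ 1
    by_cases h : k = n
    · subst h; rw [lp.single_apply_self]; norm_num
    · rw [lp.single_apply_ne _ _ _ h]; norm_num
  · have := lp.norm_apply_le_norm (E := fun _ : ℕ => ℝ) ENNReal.top_ne_zero
      (cBasis (n+1) : linf) n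
    have heq : ((cBasis (n+1) : linf) : ℕ → ℝ) n = 1 := by
      show (lp.single ⊤ n (1:ℝ) : ℕ → ℝ) n = 1
      exact lp.single_apply_self _ _ _
    rw [heq] at this
    simpa using this

lemma norm_zz_diff (n : ℕ) :
    ‖(∑ i ∈ Finset.range (n+2), aaX i • cBasis i : ↥convSp)
      - (∑ i ∈ Finset.range (n+1), aaX i • cBasis i : ↥convSp)‖ = 2 := by
  have h : (∑ i ∈ Finset.range (n+2), aaX i • cBasis i : ↥convSp)
      - (∑ i ∈ Finset.range (n+1), aaX i • cBasis i : ↥convSp)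
      = aaX (n+1) • cBasis (n+1) := by
    rw [Finset.sum_range_succ (n := n+1)]
    abel
  rw [h, norm_smul, norm_cBasis_succ]
  simp [aaX]

section caLemmas
variable {E : Type*} [NormedAddCommGroup E] [NormedSpace ℝ E] (z : ℕ → E)

lemma ca_bound (hz : ∀ n, ‖z n‖ ≤ 1) (n : ℕ) :
    ∀ d ∈ {d : ℝ | ∃ k, n ≤ k ∧ ∃ l, n ≤ l ∧ d = ‖z k - z l‖}, d ≤ 2 := by
  rintro d ⟨k, hk, l, hl, rfl⟩
  exact (norm_sub_le _ _).trans (by linarith [hz k, hz l])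

lemma ca_zero_mem (n : ℕ) :
    (0 : ℝ) ∈ {d : ℝ | ∃ k, n ≤ k ∧ ∃ l, n ≤ l ∧ d = ‖z k - z l‖} :=
  ⟨n, le_rfl, n, le_rfl, by simp⟩

lemma ca_le_two (hz : ∀ n, ‖z n‖ ≤ 1) : ca z ≤ 2 := by
  have hle : ∀ n : ℕ,
      sSup {d : ℝ | ∃ k, n ≤ k ∧ ∃ l, n ≤ l ∧ d = ‖z k - z l‖} ≤ 2 := fun n =>
    csSup_le ⟨0, ca_zero_mem z n⟩ (ca_bound z hz n)
  have hge : ∀ n : ℕ,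
      (0:ℝ) ≤ sSup {d : ℝ | ∃ k, n ≤ k ∧ ∃ l, n ≤ l ∧ d = ‖z k - z l‖} := fun n =>
    le_csSup ⟨2, ca_bound z hz n⟩ (ca_zero_mem z n)
  refine le_trans (ciInf_le ⟨0, ?_⟩ 0) (hle 0)
  rintro _ ⟨n, rfl⟩
  exact hge n

end caLemmas

lemma ca_zz_eq :
    ca (fun n => (∑ i ∈ Finset.range n, aaX i • cBasis i : ↥convSp)) = 2 := by
  set z : ℕ → ↥convSp := fun n => ∑ i ∈ Finset.range n, aaX i • cBasis i with hzdef
  have hz : ∀ n, ‖z n‖ ≤ 1 := norm_zz_le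
  have hsup : ∀ n : ℕ,
      sSup {d : ℝ | ∃ k, n ≤ k ∧ ∃ l, n ≤ l ∧ d = ‖z k - z l‖} = 2 := by
    intro n
    refine le_antisymm (csSup_le ⟨0, ca_zero_mem z n⟩ (ca_bound z hz n))
      (le_csSup ⟨2, ca_bound z hz n⟩ ?_)
    exact ⟨n + 2, by omega, n + 1, by omega, (norm_zz_diff n).symm⟩
  unfold ca
  rw [iInf_congr hsup]
  exact ciInf_const


/-- for the basis `(eₙ)_{n=0}^∞` of the space `c` of convergent
sequences, `bc₁((eₙ)) = 2`. -/
theorem bc1_cBasis : bc1 cBasis = 2 := by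
  have hmem : (2:ℝ) ∈ {c : ℝ | ∃ a : ℕ → ℝ,
      (∀ n, ‖∑ i ∈ Finset.range n, a i • cBasis i‖ ≤ 1) ∧
      c = ca (fun n => ∑ i ∈ Finset.range n, a i • cBasis i)} :=
    ⟨aaX, norm_zz_le, ca_zz_eq.symm⟩
  have hub : ∀ c ∈ {c : ℝ | ∃ a : ℕ → ℝ,
      (∀ n, ‖∑ i ∈ Finset.range n, a i • cBasis i‖ ≤ 1) ∧
      c = ca (fun n => ∑ i ∈ Finset.range n, a i • cBasis i)}, c ≤ 2 := by
    rintro c ⟨a, ha, rfl⟩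
    exact ca_le_two _ ha
  exact le_antisymm (csSup_le ⟨2, hmem⟩ hub) (le_csSup ⟨2, hub⟩ hmem)

end
end
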